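/- Let A = d·[[cos ψ, −sin ψ], [sin ψ, cos ψ]] on ℝ² with d > 0, 0 ≤ ψ < π/2, and set σ = d cos ψ, β = d. For γ > 0, the reflected resolvent R_{γA} = 2(I + γA)^{-1} − I equals √(1 − 4γσ/(1 + 2γσ + (γβ)²)) times a rotation matrix; in particular ‖R_{γA}z‖ = √(1 − 4γσ/(1+2γσ+(γβ)²)) · ‖z‖ for all z ∈ ℝ², so the contraction bound √(1 − 4γσ/(1+2γσ+(γβ)²)) is attained exactly. -/

import Mathlib

open RealInnerProductSpace Real

theorem rotation_reflected_resolvent_tight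
    (d ψ γ : ℝ) (hd : 0 < d) (hψ0 : 0 ≤ ψ) (hψ : ψ < Real.pi / 2) (hγ : 0 < γ)
    (A J : EuclideanSpace ℝ (Fin 2) → EuclideanSpace ℝ (Fin 2))
    (hA : ∀ v : EuclideanSpace ℝ (Fin 2),
      A v = (WithLp.equiv 2 (Fin 2 → ℝ)).symm
        ![d * (Real.cos ψ * v 0 - Real.sin ψ * v 1),
          d * (Real.sin ψ * v 0 + Real.cos ψ * v 1)])
    (hJ : ∀ x : EuclideanSpace ℝ (Fin 2), J x + γ • A (J x) = x) :
    (∃ c s : ℝ, c ^ 2 + s ^ 2 = 1 ∧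
      ∀ z : EuclideanSpace ℝ (Fin 2),
        (2 : ℝ) • J z - z =
          Real.sqrt (1 - 4 * γ * (d * Real.cos ψ) /
              (1 + 2 * γ * (d * Real.cos ψ) + (γ * d) ^ 2)) •
            (WithLp.equiv 2 (Fin 2 → ℝ)).symm
              ![c * z 0 + s * z 1, -s * z 0 + c * z 1]) ∧
    (∀ z : EuclideanSpace ℝ (Fin 2),
      ‖(2 : ℝ) • J z - z‖ =
        Real.sqrt (1 - 4 * γ * (d * Real.cos ψ) /
          (1 + 2 * γ * (d * Real.cos ψ) + (γ * d) ^ 2)) * ‖z‖) := by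
  have hcos : 0 < Real.cos ψ :=
    Real.cos_pos_of_mem_Ioo ⟨by linarith [Real.pi_pos], hψ⟩
  have hsc : Real.sin ψ ^ 2 + Real.cos ψ ^ 2 = 1 := Real.sin_sq_add_cos_sq ψ
  set D := 1 + 2 * γ * (d * Real.cos ψ) + (γ * d) ^ 2 with hDdef
  set r := Real.sqrt (1 - 4 * γ * (d * Real.cos ψ) / D) with hrdef
  have hann : 0 ≤ γ * (d * Real.cos ψ) := by positivity
  have hDpos : 0 < D := by nlinarith [sq_nonneg (γ * d)]
  have hnumer : 0 ≤ 1 - 4 * γ * (d * Real.cos ψ) / D := by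
    rw [sub_nonneg, div_le_one hDpos]
    nlinarith [sq_nonneg (1 - γ * (d * Real.cos ψ)), sq_nonneg (γ * d * Real.sin ψ)]
  have hr2 : r ^ 2 = 1 - 4 * γ * (d * Real.cos ψ) / D := Real.sq_sqrt hnumer
  have hrnn : 0 ≤ r := Real.sqrt_nonneg _
  have hr2D : r ^ 2 * D = D - 4 * γ * (d * Real.cos ψ) := by
    rw [hr2]; field_simp
  have hcomp : ∀ z : EuclideanSpace ℝ (Fin 2),
      J z 0 + γ * (d * (Real.cos ψ * J z 0 - Real.sin ψ * J z 1)) = z 0 ∧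
      J z 1 + γ * (d * (Real.sin ψ * J z 0 + Real.cos ψ * J z 1)) = z 1 := by
    intro z
    have h0 : (J z + γ • A (J z)) 0 = z 0 := by rw [hJ z]
    have h1 : (J z + γ • A (J z)) 1 = z 1 := by rw [hJ z]
    rw [hA] at h0 h1
    simp at h0 h1
    exact ⟨h0, h1⟩
  have huv : ∀ z : EuclideanSpace ℝ (Fin 2),
      J z 0 * D = (1 + γ * (d * Real.cos ψ)) * z 0 + γ * d * Real.sin ψ * z 1 ∧
      J z 1 * D = -(γ * d * Real.sin ψ) * z 0 + (1 + γ * (d * Real.cos ψ)) * z 1 := by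
    intro z
    obtain ⟨h0, h1⟩ := hcomp z
    constructor
    · linear_combination (1 + γ * (d * Real.cos ψ)) * h0 + γ * d * Real.sin ψ * h1 -
        J z 0 * (γ * d) ^ 2 * hsc + J z 0 * hDdef
    · linear_combination (-(γ * d * Real.sin ψ)) * h0 + (1 + γ * (d * Real.cos ψ)) * h1 -
        J z 1 * (γ * d) ^ 2 * hsc + J z 1 * hDdef
  obtain ⟨c, s, hcs, hrc, hrs⟩ : ∃ c s : ℝ, c ^ 2 + s ^ 2 = 1 ∧
      r * c * D = 1 - (γ * d) ^ 2 ∧ r * s * D = 2 * (γ * d * Real.sin ψ) := by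
    by_cases h0 : r = 0
    · have hD4 : D - 4 * γ * (d * Real.cos ψ) = 0 := by
        rw [← hr2D, h0]; ring
      have hsum : (1 - γ * (d * Real.cos ψ)) ^ 2 + (γ * d * Real.sin ψ) ^ 2 = 0 := by
        linear_combination hD4 + (γ * d) ^ 2 * hsc - hDdef
      have hsq1 : (1 - γ * (d * Real.cos ψ)) ^ 2 = 0 := by
        nlinarith [sq_nonneg (γ * d * Real.sin ψ)]
      have hsq2 : (γ * d * Real.sin ψ) ^ 2 = 0 := by
        nlinarith [sq_nonneg (1 - γ * (d * Real.cos ψ))]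
      have ha1 : γ * (d * Real.cos ψ) = 1 := by
        have := pow_eq_zero_iff (n := 2) (by norm_num) |>.mp hsq1
        linarith
      have hb0 : γ * d * Real.sin ψ = 0 := pow_eq_zero_iff (n := 2) (by norm_num) |>.mp hsq2
      have hg1 : (γ * d) ^ 2 = 1 := by
        linear_combination (γ * (d * Real.cos ψ) + 1) * ha1 + (γ * d * Real.sin ψ) * hb0 -
          (γ * d) ^ 2 * hsc
      exact ⟨1, 0, by norm_num, by rw [h0, hg1]; ring, by rw [h0, hb0]; ring⟩
    · have hrpos : 0 < r := lt_of_le_of_ne hrnn (Ne.symm h0)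
      have hkey : (1 - (γ * d) ^ 2) ^ 2 + (2 * (γ * d * Real.sin ψ)) ^ 2 = (D * r) ^ 2 := by
        have h1 : (D * r) ^ 2 = D * (r ^ 2 * D) := by ring
        rw [h1, hr2D]
        linear_combination 4 * (γ * d) ^ 2 * hsc + (4 * γ * (d * Real.cos ψ) - 2 * D -
          (1 + 2 * γ * (d * Real.cos ψ) + (γ * d) ^ 2)) * hDdef
      have hDr : D * r ≠ 0 := by positivity
      refine ⟨(1 - (γ * d) ^ 2) / (D * r), 2 * (γ * d * Real.sin ψ) / (D * r), ?_, ?_, ?_⟩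
      · field_simp
        linear_combination hkey
      · field_simp
      · field_simp
  have hmain : ∀ z : EuclideanSpace ℝ (Fin 2),
      (2 : ℝ) • J z - z = r • (WithLp.equiv 2 (Fin 2 → ℝ)).symm
        ![c * z 0 + s * z 1, -s * z 0 + c * z 1] := by
    intro z
    obtain ⟨hu, hv⟩ := huv z
    ext i
    fin_cases i
    · show 2 * J z 0 - z 0 = r * (c * z 0 + s * z 1)
      have e0 : (2 * J z 0 - z 0) * D = (r * (c * z 0 + s * z 1)) * D := by
        linear_combination 2 * hu - z 0 * hrc - z 1 * hrs - z 0 * hDdef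
      exact mul_right_cancel₀ hDpos.ne' e0
    · show 2 * J z 1 - z 1 = r * (-s * z 0 + c * z 1)
      have e1 : (2 * J z 1 - z 1) * D = (r * (-s * z 0 + c * z 1)) * D := by
        linear_combination 2 * hv + z 0 * hrs - z 1 * hrc - z 1 * hDdef
      exact mul_right_cancel₀ hDpos.ne' e1
  refine ⟨⟨c, s, hcs, hmain⟩, ?_⟩
  intro z
  rw [hmain z, norm_smul, Real.norm_eq_abs, abs_of_nonneg hrnn]
  congr 1
  rw [EuclideanSpace.norm_eq, EuclideanSpace.norm_eq]
  rw [Fin.sum_univ_two, Fin.sum_univ_two]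
  simp only [WithLp.equiv_symm_apply, PiLp.toLp_apply, Matrix.cons_val_zero, Matrix.cons_val_one,
    Matrix.head_cons, Real.norm_eq_abs, sq_abs]
  congr 1
  linear_combination (z 0 ^ 2 + z 1 ^ 2) * hcs
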